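/- Let X be a topological space and Y a nonempty compact topological space. If the product space X × Y is T-locally compact, then X is T-locally compact. -/
import Mathlib


def TLocallyCompact (X : Type*) [TopologicalSpace X] : Prop :=
  ∀ (x : X) (U : Set X), IsOpen U → x ∈ U →
    ∃ V : Set X, IsOpen V ∧ x ∈ V ∧ V ⊆ U ∧ IsCompact (frontier V)

theorem tLocallyCompact_of_prod_compact (X Y : Type*) [TopologicalSpace X]
    [TopologicalSpace Y] [CompactSpace Y] [Nonempty Y]
    (h : TLocallyCompact (X × Y)) : TLocallyCompact X := by
  intro x U hU hx
  have hW : ∀ y : Y, ∃ W : Set (X × Y), IsOpen W ∧ (x, y) ∈ W ∧ W ⊆ U ×ˢ Set.univ ∧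
      IsCompact (frontier W) := fun y =>
    h (x, y) (U ×ˢ Set.univ) (hU.prod isOpen_univ) ⟨hx, trivial⟩
  choose W hWopen hWmem hWsub hWfr using hW
  have hslice : IsCompact ({x} ×ˢ (Set.univ : Set Y)) :=
    isCompact_singleton.prod isCompact_univ
  obtain ⟨t, ht⟩ := hslice.elim_finite_subcover W hWopen (by
    rintro ⟨a, y⟩ ⟨rfl, -⟩
    exact Set.mem_iUnion.2 ⟨y, hWmem y⟩)
  set Wt : Set (X × Y) := ⋃ y ∈ t, W y with hWt
  have hWtopen : IsOpen Wt := isOpen_biUnion fun y _ => hWopen y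
  have hWtfr : IsCompact (frontier Wt) := by
    have hK : IsCompact (⋃ y ∈ t, frontier (W y)) :=
      t.finite_toSet.isCompact_biUnion fun y _ => hWfr y
    refine hK.of_isClosed_subset isClosed_frontier ?_
    intro p hp
    rw [hWtopen.frontier_eq] at hp
    obtain ⟨hc, hn⟩ := hp
    rw [hWt, t.closure_biUnion] at hc
    obtain ⟨y, hy, hcy⟩ := Set.mem_iUnion₂.1 hc
    refine Set.mem_iUnion₂.2 ⟨y, hy, ?_⟩
    rw [(hWopen y).frontier_eq]
    exact ⟨hcy, fun hmem => hn (Set.mem_iUnion₂.2 ⟨y, hy, hmem⟩)⟩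
  set V : Set X := (Prod.fst '' Wtᶜ)ᶜ with hV
  have hVopen : IsOpen V :=
    isOpen_compl_iff.2 (isClosedMap_fst_of_compactSpace _ hWtopen.isClosed_compl)
  have hxV : x ∈ V := by
    rintro ⟨p, hpW, hpx⟩
    exact hpW (ht (show p ∈ ({x} ×ˢ (Set.univ : Set Y)) from ⟨hpx, trivial⟩))
  have hVWt : V ×ˢ (Set.univ : Set Y) ⊆ Wt := by
    rintro ⟨a, y⟩ ⟨ha, -⟩
    by_contra hmem
    exact ha ⟨(a, y), hmem, rfl⟩
  have hVU : V ⊆ U := by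
    intro a ha
    obtain ⟨y0⟩ := ‹Nonempty Y›
    have : (a, y0) ∈ Wt := hVWt ⟨ha, trivial⟩
    obtain ⟨y, hy, hmem⟩ := Set.mem_iUnion₂.1 this
    exact (hWsub y hmem).1
  refine ⟨V, hVopen, hxV, hVU, ?_⟩
  refine ((hWtfr.image continuous_fst).of_isClosed_subset isClosed_frontier ?_)
  intro a ha
  rw [hVopen.frontier_eq] at ha
  obtain ⟨hac, han⟩ := ha
  have : a ∈ Prod.fst '' Wtᶜ := by simpa [hV] using han
  obtain ⟨p, hp, hpa⟩ := this
  refine ⟨(a, p.2), ?_, rfl⟩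
  rw [hWtopen.frontier_eq]
  constructor
  · have h1 : (a, p.2) ∈ closure (V ×ˢ (Set.univ : Set Y)) := by
      rw [closure_prod_eq]
      exact ⟨hac, by simp⟩
    exact closure_mono hVWt h1
  · intro hmem
    apply hp
    rwa [← hpa, Prod.mk.eta] at hmem
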